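/- Let G be a group of nilpotency class at most 2 and let m, n be natural numbers. Then for all x, y in G, ⁅x,y⁆^{(2m+1)n} ∘ₘ (x ∘ₘ y) = x ∘_{(2m+1)n+m} y. (Since the ∘ₘ-commutator of x and y is ⁅x,y⁆^{2m+1} and its ∘ₘ-powers are ordinary powers, this says that applying the construction S_n to the group (G, ∘ₘ) yields the operation ∘_{(2m+1)n+m}; by induction, S_n^i(G) = S_{s(i)}(G) where s(i) = ((2n+1)^i − 1)/2.) -/

import Mathlib

/-- The commutator `[x,y] = x⁻¹y⁻¹xy` as used in the paper. -/
def pcomm {G : Type*} [Group G] (x y : G) : G := x⁻¹ * y⁻¹ * x * y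

/-- The operation `x ∘ₙ y := [x,y]^n x y` of the paper. -/
def opn {G : Type*} [Group G] (n : ℕ) (x y : G) : G := (pcomm x y) ^ n * x * y

/-- In a group of nilpotency class at most 2, for all `m n : ℕ` and
`x y : G`, `[x,y]^((2m+1)n) ∘ₘ (x ∘ₘ y) = x ∘_((2m+1)n+m) y`. -/
theorem stmt_6 {G : Type*} [Group G]
    (hG : ∀ x y z : G, pcomm (pcomm x y) z = 1) (m n : ℕ) (x y : G) :
    opn m ((pcomm x y) ^ ((2 * m + 1) * n)) (opn m x y) = opn ((2 * m + 1) * n + m) x y := by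
  set c := pcomm x y with hc
  have hcom : ∀ z : G, Commute c z := by
    intro z
    have h := hG x y z
    rw [← hc] at h
    unfold pcomm at h
    have : c * z = z * c := by
      have := congrArg (fun w => z * c * w) h
      simpa [mul_assoc] using this
    exact this
  have hpc : ∀ (k : ℕ) (w : G), pcomm (c ^ k) w = 1 := by
    intro k w
    have : Commute (c ^ k) w := (hcom w).pow_left k
    unfold pcomm
    rw [mul_assoc ((c ^ k)⁻¹) w⁻¹, ← this.inv_right.eq]
    group
  unfold opn
  rw [hpc, one_pow, one_mul, pow_add]
  rw [← hc]
  group
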